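/- arXiv:2504.02049 — 2 statements merged into one kernel-verified Lean document; each statement's English description precedes it below -/
import Mathlib

section
/- If each edge potential U_e is differentiable and convex and each node objective f_i is convex, then the nonlinear homological program — minimize Σ_i f_i(x_i) subject to L_F^{∇U} x = 0 — is a convex optimization problem; in particular, the feasible set {x : L_F^{∇U} x = 0} is closed and convex. -/
/-!
STATEMENT 3: If each edge potential U_e is differentiable and convex and each node
objective f_i is convex (valued in ℝ ∪ {∞}), then the nonlinear homological program
is a convex optimization problem; in particular the feasible set {x : L_F^{∇U} x = 0}
is closed and convex.
-/

open scoped InnerProductSpace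
open Set Filter Topology

lemma ereal_mul_add (c : ℝ) (hc : 0 ≤ c) (p q : EReal) :
    (c : EReal) * (p + q) = (c : EReal) * p + (c : EReal) * q := by
  rcases hc.eq_or_lt with h | h
  · simp [← h, EReal.zero_mul]
  · have hc' : (0 : EReal) < (c : EReal) := by exact_mod_cast h
    induction p using EReal.rec <;> induction q using EReal.rec <;>
      simp_all [EReal.mul_bot_of_pos hc', EReal.mul_top_of_pos hc', ← EReal.coe_mul,
        ← EReal.coe_add, mul_add]

lemma ereal_mul_sum {ι : Type*} (s : Finset ι) (c : ℝ) (hc : 0 ≤ c) (u : ι → EReal) :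
    (c : EReal) * ∑ i ∈ s, u i = ∑ i ∈ s, (c : EReal) * u i := by
  classical
  induction s using Finset.induction with
  | empty => simp
  | insert _ _ hx ih => rw [Finset.sum_insert hx, Finset.sum_insert hx, ereal_mul_add c hc, ih]

/-- First-order optimality for convex differentiable functions. -/
lemma grad_zero_iff_min {F : Type*} [NormedAddCommGroup F] [InnerProductSpace ℝ F] [CompleteSpace F]
    {g : F → ℝ} {G : F → F} (hconv : ConvexOn ℝ Set.univ g)
    (hgrad : ∀ x, HasGradientAt g (G x) x) (x : F) :
    G x = 0 ↔ ∀ y, g x ≤ g y := by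
  constructor
  · intro hGx y
    -- slope argument along the segment from x to y
    have hline : ∀ t : ℝ, HasDerivAt (fun t : ℝ => x + t • (y - x)) (y - x) t := by
      intro t
      simpa using ((hasDerivAt_id t).smul_const (y - x)).const_add x
    have hφ : HasDerivAt (fun t : ℝ => g (x + t • (y - x))) 0 0 := by
      have h1 : HasFDerivAt g (InnerProductSpace.toDual ℝ F (G x)) (x + (0:ℝ) • (y - x)) := by
        simpa using (hgrad x).hasFDerivAt
      have := h1.comp_hasDerivAt 0 (hline 0)
      simp [hGx] at this; exact this
    have htend : Tendsto (slope (fun t : ℝ => g (x + t • (y - x))) 0) (𝓝[>] (0:ℝ)) (𝓝 0) :=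
      (hasDerivAt_iff_tendsto_slope.mp hφ).mono_left
        (nhdsWithin_mono 0 (fun t ht => ne_of_gt ht))
    have hev : ∀ᶠ t in 𝓝[>] (0:ℝ),
        slope (fun t : ℝ => g (x + t • (y - x))) 0 t ≤ g y - g x := by
      filter_upwards [Ioo_mem_nhdsGT (by norm_num : (0:ℝ) < 1)] with t ht
      have ht0 : 0 < t := ht.1
      have ht1 : t < 1 := ht.2
      have hcomb : x + t • (y - x) = (1 - t) • x + t • y := by
        simp [smul_sub, sub_smul]; abel
      have hcvx := hconv.2 (mem_univ x) (mem_univ y) (by linarith : (0:ℝ) ≤ 1 - t)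
        ht0.le (by ring)
      have hle : g (x + t • (y - x)) ≤ (1 - t) * g x + t * g y := by
        rw [hcomb]; simpa [smul_eq_mul] using hcvx
      have hgoal : (g (x + t • (y - x)) - g x) / t ≤ g y - g x := by
        rw [div_le_iff₀ ht0]; nlinarith
      rw [slope_def_field]
      simpa using hgoal
    have := le_of_tendsto htend hev
    linarith
  · intro hmin
    have hloc : IsLocalMin g x := (isMinOn_univ_iff.mpr hmin).isLocalMin (by simp)
    have := hloc.hasFDerivAt_eq_zero (hgrad x).hasFDerivAt
    have h2 : InnerProductSpace.toDual ℝ F (G x) = InnerProductSpace.toDual ℝ F 0 := by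
      simpa using this
    exact (InnerProductSpace.toDual ℝ F).injective h2


/-- Convexity for extended-real-valued functions (values in `ℝ ∪ {∞} ⊆ EReal`). -/
def ERealConvexOn {α : Type*} [AddCommMonoid α] [Module ℝ α] (f : α → EReal) : Prop :=
  ∀ x y : α, ∀ a b : ℝ, 0 ≤ a → 0 ≤ b → a + b = 1 →
    f (a • x + b • y) ≤ (a : EReal) * f x + (b : EReal) * f y

variable {V : Type*} [Fintype V] {E : Type*} [Fintype E]

/-- The coboundary operator of a cellular sheaf on a graph with oriented edges. -/
noncomputable def coboundary
    (Vs : V → Type*) [∀ i, NormedAddCommGroup (Vs i)] [∀ i, InnerProductSpace ℝ (Vs i)]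
    (Es : E → Type*) [∀ e, NormedAddCommGroup (Es e)] [∀ e, InnerProductSpace ℝ (Es e)]
    (s t : E → V)
    (F1 : ∀ e, Vs (s e) →ₗ[ℝ] Es e) (F2 : ∀ e, Vs (t e) →ₗ[ℝ] Es e) :
    PiLp 2 Vs →ₗ[ℝ] PiLp 2 Es :=
  (WithLp.linearEquiv 2 ℝ (∀ e, Es e)).symm.toLinearMap ∘ₗ
    LinearMap.pi (fun e =>
      F1 e ∘ₗ (LinearMap.proj (s e)) ∘ₗ (WithLp.linearEquiv 2 ℝ (∀ i, Vs i)).toLinearMap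
      - F2 e ∘ₗ (LinearMap.proj (t e)) ∘ₗ (WithLp.linearEquiv 2 ℝ (∀ i, Vs i)).toLinearMap)

theorem homological_program_convex
    (Vs : V → Type*) [∀ i, NormedAddCommGroup (Vs i)] [∀ i, InnerProductSpace ℝ (Vs i)]
    [∀ i, FiniteDimensional ℝ (Vs i)]
    (Es : E → Type*) [∀ e, NormedAddCommGroup (Es e)] [∀ e, InnerProductSpace ℝ (Es e)]
    [∀ e, FiniteDimensional ℝ (Es e)]
    (s t : E → V)
    (F1 : ∀ e, Vs (s e) →ₗ[ℝ] Es e) (F2 : ∀ e, Vs (t e) →ₗ[ℝ] Es e)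
    -- edge potentials, their gradients, convexity and differentiability
    (Ue : ∀ e, Es e → ℝ) (gUe : ∀ e, Es e → Es e)
    (hUconv : ∀ e, ConvexOn ℝ Set.univ (Ue e))
    (hUgrad : ∀ e (y : Es e), HasGradientAt (Ue e) (gUe e y) y)
    -- node objectives, convex, valued in ℝ ∪ {∞}
    (f : ∀ i, Vs i → EReal) (hf : ∀ i, ERealConvexOn (f i))
    -- the nonlinear sheaf Laplacian L = δᵀ ∘ ∇U ∘ δ
    (L : PiLp 2 Vs → PiLp 2 Vs)
    (hL : ∀ x, L x = LinearMap.adjoint (coboundary Vs Es s t F1 F2)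
      ((WithLp.equiv 2 (∀ e, Es e)).symm
        (fun e => gUe e (coboundary Vs Es s t F1 F2 x e)))) :
    Convex ℝ {x : PiLp 2 Vs | L x = 0} ∧ IsClosed {x : PiLp 2 Vs | L x = 0} ∧
      ERealConvexOn (fun x : PiLp 2 Vs => ∑ i : V, f i (x i)) := by
  classical
  set δ := coboundary Vs Es s t F1 F2 with hδ
  let δc : PiLp 2 Vs →L[ℝ] PiLp 2 Es := LinearMap.toContinuousLinearMap δ
  let proje : ∀ e : E, PiLp 2 Es →L[ℝ] Es e := fun e =>
    LinearMap.toContinuousLinearMap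
      ((LinearMap.proj e).comp (WithLp.linearEquiv 2 ℝ (∀ e, Es e)).toLinearMap)
  set g : PiLp 2 Vs → ℝ := fun z => ∑ e, Ue e (δc z e) with hg
  -- convexity of g
  have hgconv : ConvexOn ℝ Set.univ g := by
    refine ⟨convex_univ, ?_⟩
    intro p _ q _ a b ha hb hab
    have hmap : δc (a • p + b • q) = a • δc p + b • δc q := by
      rw [map_add, map_smul, map_smul]
    calc ∑ e, Ue e (δc (a • p + b • q) e)
        = ∑ e, Ue e (a • δc p e + b • δc q e) := by
          rw [hmap]; simp [PiLp.add_apply, PiLp.smul_apply]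
      _ ≤ ∑ e, (a * Ue e (δc p e) + b * Ue e (δc q e)) := by
          refine Finset.sum_le_sum fun e _ => ?_
          simpa [smul_eq_mul] using (hUconv e).2 (Set.mem_univ _) (Set.mem_univ _) ha hb hab
      _ = a • g p + b • g q := by
          rw [Finset.sum_add_distrib, ← Finset.mul_sum, ← Finset.mul_sum]; simp [hg, smul_eq_mul]
  -- gradient of g is L
  have key : ∀ x : PiLp 2 Vs, HasGradientAt g (L x) x := by
    intro x
    rw [hasGradientAt_iff_hasFDerivAt]
    have He : ∀ e : E, HasFDerivAt (fun z : PiLp 2 Vs => Ue e (δc z e))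
        (((InnerProductSpace.toDual ℝ (Es e)) (gUe e (δc x e))).comp
          ((proje e).comp δc)) x := fun e =>
      (hasGradientAt_iff_hasFDerivAt.mp (hUgrad e (δc x e))).comp x
        ((proje e).comp δc).hasFDerivAt
    have hsum := HasFDerivAt.fun_sum (fun e (_ : e ∈ Finset.univ) => He e)
    have hDeq : (∑ e : E, ((InnerProductSpace.toDual ℝ (Es e)) (gUe e (δc x e))).comp
        ((proje e).comp δc)) = InnerProductSpace.toDual ℝ (PiLp 2 Vs) (L x) := by
      refine ContinuousLinearMap.ext fun y => ?_
      rw [hL x]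
      simp only [ContinuousLinearMap.sum_apply, ContinuousLinearMap.comp_apply,
        InnerProductSpace.toDual_apply_apply, LinearMap.adjoint_inner_left, PiLp.inner_apply]
      rfl
    exact hDeq ▸ hsum
  have hchar : ∀ x : PiLp 2 Vs, L x = 0 ↔ ∀ y, g x ≤ g y := fun x =>
    grad_zero_iff_min hgconv key x
  refine ⟨?_, ?_, ?_⟩
  · -- convex
    intro p hp q hq a b ha hb hab
    rw [Set.mem_setOf_eq, hchar]
    intro y
    have hp' := (hchar p).mp hp
    have hq' := (hchar q).mp hq
    calc g (a • p + b • q) ≤ a * g p + b * g q := by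
          simpa [smul_eq_mul] using hgconv.2 (Set.mem_univ p) (Set.mem_univ q) ha hb hab
      _ ≤ a * g y + b * g y :=
          add_le_add (mul_le_mul_of_nonneg_left (hp' y) ha)
            (mul_le_mul_of_nonneg_left (hq' y) hb)
      _ = g y := by rw [← add_mul, hab, one_mul]
  · -- closed
    have hcont : Continuous g := by
      refine continuous_finset_sum _ fun e _ => ?_
      have h1 : Continuous (Ue e) := continuous_iff_continuousAt.mpr fun z =>
        (hasGradientAt_iff_hasFDerivAt.mp (hUgrad e z)).continuousAt
      exact h1.comp ((proje e).comp δc).continuous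
    have hSet : {x : PiLp 2 Vs | L x = 0} = ⋂ y, {x | g x ≤ g y} := by
      ext x; simp [hchar x, Set.mem_iInter]
    rw [hSet]
    exact isClosed_iInter fun y => isClosed_le hcont continuous_const
  · -- objective convex
    intro x y a b ha hb hab
    have h1 : ∀ i : V, f i ((a • x + b • y) i) ≤ (a : EReal) * f i (x i) + (b : EReal) * f i (y i) := by
      intro i
      have := hf i (x i) (y i) a b ha hb hab
      simpa [PiLp.add_apply, PiLp.smul_apply] using this
    calc ∑ i : V, f i ((a • x + b • y) i)
        ≤ ∑ i : V, ((a : EReal) * f i (x i) + (b : EReal) * f i (y i)) :=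
          Finset.sum_le_sum fun i _ => h1 i
      _ = (a : EReal) * ∑ i : V, f i (x i) + (b : EReal) * ∑ i : V, f i (y i) := by
          rw [Finset.sum_add_distrib, ereal_mul_sum _ a ha, ereal_mul_sum _ b hb]
end

section
/- Let each edge potential U_e be differentiable and strongly convex with unique minimizer b_e satisfying U_e(b_e) = 0, and let b = (b_e)_{e∈E}. If b ∈ image(δ), then the zero set of the nonlinear sheaf Laplacian is the affine subspace δ⁺b + ker δ; that is, L_F^{∇U} x = 0 if and only if x = δ⁺b + h for some h with δh = 0. -/
open RealInnerProductSpace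

/-- First-order condition: a convex differentiable function lies above its tangent plane. -/
lemma convex_first_order {F : Type*} [NormedAddCommGroup F] [InnerProductSpace ℝ F]
    [CompleteSpace F] {f : F → ℝ} (hf : ConvexOn ℝ Set.univ f) {y g : F}
    (hg : HasGradientAt f g y) (z : F) : f y + ⟪g, z - y⟫ ≤ f z := by
  set φ : ℝ → ℝ := fun t => f (y + t • (z - y)) with hφ
  have hφc : ConvexOn ℝ Set.univ φ := by
    have h := hf.comp_affineMap (AffineMap.lineMap y z)
    have : φ = f ∘ (AffineMap.lineMap y z : ℝ →ᵃ[ℝ] F) := by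
      funext t
      simp [hφ, AffineMap.lineMap_apply, add_comm]
    rw [this]
    simpa using h
  have hline : HasDerivAt (fun t : ℝ => y + t • (z - y)) (z - y) 0 := by
    have h1 : HasDerivAt (fun t : ℝ => t • (z - y)) ((1 : ℝ) • (z - y)) 0 :=
      (hasDerivAt_id (0 : ℝ)).smul_const (z - y)
    simpa using h1.const_add y
  have hval : y + (0 : ℝ) • (z - y) = y := by simp
  have hd : HasDerivAt φ (⟪g, z - y⟫) 0 := by
    have hF : HasFDerivAt f (InnerProductSpace.toDual ℝ F g : F →L[ℝ] ℝ) y := hg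
    have hF' : HasFDerivAt f (InnerProductSpace.toDual ℝ F g : F →L[ℝ] ℝ)
        (y + (0 : ℝ) • (z - y)) := by rw [hval]; exact hF
    have := hF'.comp_hasDerivAt (x := (0 : ℝ)) hline
    simp [InnerProductSpace.toDual_apply_apply] at this
    exact this
  have hslope := hφc.le_slope_of_hasDerivAt (Set.mem_univ (0 : ℝ)) (Set.mem_univ (1 : ℝ))
    one_pos hd
  have : slope φ 0 1 = f z - f y := by
    simp [slope_def_field, hφ]
  rw [this] at hslope
  linarith

/-- The gradient vanishes at a global minimum. -/
lemma grad_zero_at_min {F : Type*} [NormedAddCommGroup F] [InnerProductSpace ℝ F]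
    [CompleteSpace F] {f : F → ℝ} {y g : F} (hg : HasGradientAt f g y)
    (hmin : IsMinOn f Set.univ y) : g = 0 := by
  have hloc : IsLocalMin f y := hmin.isLocalMin (by simp)
  have hF : HasFDerivAt f (InnerProductSpace.toDual ℝ F g : F →L[ℝ] ℝ) y := hg
  have h0 : (InnerProductSpace.toDual ℝ F g : F →L[ℝ] ℝ) = 0 := hloc.hasFDerivAt_eq_zero hF
  have := congrArg (fun T => (InnerProductSpace.toDual ℝ F).symm T) h0
  simpa using this

variable {C0 : Type*} [NormedAddCommGroup C0] [InnerProductSpace ℝ C0] [FiniteDimensional ℝ C0]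
variable {E : Type*} [Fintype E]
variable (Es : E → Type*) [∀ e, NormedAddCommGroup (Es e)] [∀ e, InnerProductSpace ℝ (Es e)]
  [∀ e, FiniteDimensional ℝ (Es e)]

/-- `δ⁺ b` for `b ∈ image δ`: the unique preimage of `b` lying in `(ker δ)ᗮ = image δᵀ`,
i.e. the Moore–Penrose pseudoinverse applied to `b`. -/
noncomputable def pinvVec {C1 : Type*} [NormedAddCommGroup C1] [InnerProductSpace ℝ C1]
    (δ : C0 →ₗ[ℝ] C1) (b : C1) (hb : b ∈ LinearMap.range δ) : C0 :=
  (Submodule.orthogonalProjection (LinearMap.ker δ)ᗮ hb.choose : C0)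

lemma pinvVec_spec {C1 : Type*} [NormedAddCommGroup C1] [InnerProductSpace ℝ C1]
    (δ : C0 →ₗ[ℝ] C1) (b : C1) (hb : b ∈ LinearMap.range δ) :
    δ (pinvVec δ b hb) = b := by
  set c := hb.choose with hc
  have hδc : δ c = b := hb.choose_spec
  have hker : c - (Submodule.orthogonalProjection (LinearMap.ker δ)ᗮ c : C0) ∈ LinearMap.ker δ := by
    have h1 : c - (Submodule.orthogonalProjection (LinearMap.ker δ)ᗮ c : C0) ∈
        ((LinearMap.ker δ)ᗮ)ᗮ := Submodule.sub_starProjection_mem_orthogonal (K := (LinearMap.ker δ)ᗮ) c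
    rwa [Submodule.orthogonal_orthogonal] at h1
  have : δ (c - (Submodule.orthogonalProjection (LinearMap.ker δ)ᗮ c : C0)) = 0 := hker
  rw [map_sub] at this
  rw [pinvVec, ← hc]
  rw [hδc] at this
  linear_combination (norm := module) -this

theorem zero_set_of_nonlinear_laplacian_eq_affine
    (δ : C0 →ₗ[ℝ] PiLp 2 Es)
    (Ue : ∀ e, Es e → ℝ) (gUe : ∀ e, Es e → Es e) (b : ∀ e, Es e)
    (m : E → ℝ) (hm : ∀ e, 0 < m e)
    (hsc : ∀ e, StrongConvexOn Set.univ (m e) (Ue e))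
    (hgrad : ∀ e (y : Es e), HasGradientAt (Ue e) (gUe e y) y)
    (hbmin : ∀ e, IsMinOn (Ue e) Set.univ (b e))
    (hb0 : ∀ e, Ue e (b e) = 0)
    (hrange : (WithLp.equiv 2 (∀ e, Es e)).symm b ∈ LinearMap.range δ) :
    ∀ x : C0,
      LinearMap.adjoint δ
          ((WithLp.equiv 2 (∀ e, Es e)).symm (fun e => gUe e ((δ x) e))) = 0 ↔
        ∃ h ∈ LinearMap.ker δ,
          x = pinvVec δ ((WithLp.equiv 2 (∀ e, Es e)).symm b) hrange + h := by
  set b' : PiLp 2 Es := (WithLp.equiv 2 (∀ e, Es e)).symm b with hb'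
  set p : C0 := pinvVec δ b' hrange with hp
  have hδp : δ p = b' := pinvVec_spec δ b' hrange
  have hconv : ∀ e, ConvexOn ℝ Set.univ (Ue e) := fun e =>
    strongConvexOn_zero.mp ((hsc e).mono (hm e).le)
  intro x
  constructor
  · intro hzero
    -- Key: δ x = b'
    have hsum : ∑ e, ⟪gUe e ((δ x) e), (δ x) e - b e⟫ = 0 := by
      have h1 : ⟪(WithLp.equiv 2 (∀ e, Es e)).symm (fun e => gUe e ((δ x) e)),
          δ (x - p)⟫ = 0 := by
        rw [← LinearMap.adjoint_inner_left, hzero, inner_zero_left]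
      have h2 : δ (x - p) = δ x - b' := by rw [map_sub, hδp]
      rw [h2, PiLp.inner_apply] at h1
      exact h1
    have hUnn : ∀ e (y : Es e), 0 ≤ Ue e y := by
      intro e y
      have := hbmin e (Set.mem_univ y)
      simp only [hb0 e] at this
      exact this
    have hterm_ge : ∀ e, Ue e ((δ x) e) ≤ ⟪gUe e ((δ x) e), (δ x) e - b e⟫ := by
      intro e
      have h := convex_first_order (hconv e) (hgrad e ((δ x) e)) (b e)
      have : ⟪gUe e ((δ x) e), b e - (δ x) e⟫ = -⟪gUe e ((δ x) e), (δ x) e - b e⟫ := by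
        rw [← inner_neg_right]; congr 1; abel
      rw [hb0 e, this] at h
      linarith
    have hterm_nonneg : ∀ e ∈ Finset.univ, (0:ℝ) ≤ ⟪gUe e ((δ x) e), (δ x) e - b e⟫ :=
      fun e _ => le_trans (hUnn e _) (hterm_ge e)
    have hterm_zero : ∀ e ∈ Finset.univ, ⟪gUe e ((δ x) e), (δ x) e - b e⟫ = 0 :=
      (Finset.sum_eq_zero_iff_of_nonneg hterm_nonneg).mp hsum
    have hδxb : ∀ e, (δ x) e = b e := by
      intro e
      have hU0 : Ue e ((δ x) e) = 0 := by
        have h1 := hterm_ge e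
        rw [hterm_zero e (Finset.mem_univ e)] at h1
        exact le_antisymm h1 (hUnn e _)
      have hmin' : IsMinOn (Ue e) Set.univ ((δ x) e) := by
        intro z _
        simp only [Set.mem_setOf_eq, hU0]
        exact hUnn e z
      exact ((hsc e).strictConvexOn (hm e)).eq_of_isMinOn hmin' (hbmin e)
        (Set.mem_univ _) (Set.mem_univ _)
    have hδx : δ x = b' := by
      ext e; exact hδxb e
    refine ⟨x - p, ?_, by abel⟩
    simp only [LinearMap.mem_ker, map_sub, hδx, hδp, sub_self]
  · rintro ⟨h, hh, rfl⟩
    have hδx : δ (p + h) = b' := by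
      rw [map_add, hδp, LinearMap.mem_ker.mp hh, add_zero]
    have hgz : ∀ e, gUe e ((δ (p + h)) e) = 0 := by
      intro e
      have : (δ (p + h)) e = b e := by rw [hδx]; rfl
      rw [this]
      exact grad_zero_at_min (hgrad e (b e)) (hbmin e)
    have : (WithLp.equiv 2 (∀ e, Es e)).symm (fun e => gUe e ((δ (p + h)) e)) = 0 := by
      ext e
      exact hgz e
    rw [this, map_zero]
end
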